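/- The sum φ₁+φ₂+φ₃ = π, where for positive reals a₁,a₂,a₃ one defines p(x) = (1+a₁x²)(1+a₂x²)(1+a₃x²) − 1, P(x) = p(x)/x², and φ_k = a_k ∫_{−∞}^{∞} dx / ((1+a_k x²)√(P(x))). -/

import Mathlib

open Real

/-- `p(x) = (1+a₁x²)(1+a₂x²)(1+a₃x²) − 1` for parameters `a = (a₁,a₂,a₃)`. -/
noncomputable def pfun (a : Fin 3 → ℝ) (x : ℝ) : ℝ :=
  (1 + a 0 * x ^ 2) * (1 + a 1 * x ^ 2) * (1 + a 2 * x ^ 2) - 1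

/-- `P(x) = p(x)/x²`. -/
noncomputable def Pfun (a : Fin 3 → ℝ) (x : ℝ) : ℝ := pfun a x / x ^ 2

/-- `φ_k = a_k ∫_{−∞}^{∞} dx / ((1 + a_k x²) √(P(x)))`. -/
noncomputable def phi (a : Fin 3 → ℝ) (k : Fin 3) : ℝ :=
  a k * ∫ x : ℝ, 1 / ((1 + a k * x ^ 2) * Real.sqrt (Pfun a x))

namespace PhiAux

open MeasureTheory Set Filter

/-- The integrand of `φ_k`. -/
noncomputable def f (a : Fin 3 → ℝ) (k : Fin 3) (x : ℝ) : ℝ :=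
  1 / ((1 + a k * x ^ 2) * Real.sqrt (Pfun a x))

/-- The sum `a₀f₀ + a₁f₁ + a₂f₂`. -/
noncomputable def h (a : Fin 3 → ℝ) (x : ℝ) : ℝ :=
  a 0 * f a 0 x + a 1 * f a 1 x + a 2 * f a 2 x

variable {a : Fin 3 → ℝ}

lemma q_pos (ha : ∀ k, 0 < a k) (k : Fin 3) (x : ℝ) : 0 < 1 + a k * x ^ 2 := by
  nlinarith [mul_nonneg (ha k).le (sq_nonneg x)]

lemma p_pos (ha : ∀ k, 0 < a k) {x : ℝ} (hx : x ≠ 0) : 0 < pfun a x := by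
  have hx2 : 0 < x ^ 2 := by positivity
  have h0 := mul_pos (ha 0) hx2
  have h1 := mul_pos (ha 1) hx2
  have h2 := mul_pos (ha 2) hx2
  unfold pfun
  nlinarith [mul_pos h0 h1, mul_pos h0 h2, mul_pos h1 h2, mul_pos (mul_pos h0 h1) h2]

lemma f_nonneg (ha : ∀ k, 0 < a k) (k : Fin 3) (x : ℝ) : 0 ≤ f a k x := by
  unfold f
  exact div_nonneg zero_le_one
    (mul_nonneg (q_pos ha k x).le (Real.sqrt_nonneg _))

lemma f_meas (k : Fin 3) : Measurable (f a k) := by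
  have mp : Measurable (pfun a) := by unfold pfun; fun_prop
  have mP : Measurable (Pfun a) := by unfold Pfun; fun_prop
  unfold f
  fun_prop

/-- The crucial derivative computation: for `x > 0`,
`d/dx arctan (√(p x)) = a₀ f₀ x + a₁ f₁ x + a₂ f₂ x`. -/
lemma hasDeriv (ha : ∀ k, 0 < a k) {x : ℝ} (hx : 0 < x) :
    HasDerivAt (fun y => Real.arctan (Real.sqrt (pfun a y))) (h a x) x := by
  have hpx : 0 < pfun a x := p_pos ha hx.ne'
  have hq0 := q_pos ha 0 x
  have hq1 := q_pos ha 1 x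
  have hq2 := q_pos ha 2 x
  -- derivative of the inner polynomial
  have d0 : HasDerivAt (fun y : ℝ => 1 + a 0 * y ^ 2) (a 0 * (2 * x)) x := by
    simpa using ((hasDerivAt_pow 2 x).const_mul (a 0)).const_add 1
  have d1 : HasDerivAt (fun y : ℝ => 1 + a 1 * y ^ 2) (a 1 * (2 * x)) x := by
    simpa using ((hasDerivAt_pow 2 x).const_mul (a 1)).const_add 1
  have d2 : HasDerivAt (fun y : ℝ => 1 + a 2 * y ^ 2) (a 2 * (2 * x)) x := by
    simpa using ((hasDerivAt_pow 2 x).const_mul (a 2)).const_add 1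
  have hp : HasDerivAt (fun y => pfun a y)
      ((a 0 * (2 * x) * (1 + a 1 * x ^ 2) + (1 + a 0 * x ^ 2) * (a 1 * (2 * x))) *
          (1 + a 2 * x ^ 2)
        + (1 + a 0 * x ^ 2) * (1 + a 1 * x ^ 2) * (a 2 * (2 * x))) x := by
    simpa [pfun] using ((d0.mul d1).mul d2).sub_const 1
  have harc := (hp.sqrt hpx.ne').arctan
  convert harc using 1
  -- now prove the values agree
  have hs : 0 < Real.sqrt (pfun a x) := Real.sqrt_pos.mpr hpx
  have hs2 : Real.sqrt (pfun a x) ^ 2 = pfun a x := Real.sq_sqrt hpx.le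
  have hPf : Real.sqrt (Pfun a x) = Real.sqrt (pfun a x) / x := by
    rw [Pfun, Real.sqrt_div hpx.le, Real.sqrt_sq hx.le]
  have h1p : 1 + pfun a x
      = (1 + a 0 * x ^ 2) * ((1 + a 1 * x ^ 2) * (1 + a 2 * x ^ 2)) := by
    unfold pfun; ring
  unfold h f
  rw [hPf, hs2, h1p]
  generalize hsv : Real.sqrt (pfun a x) = s at hs
  have hx0 := hx.ne'
  have hq0' := hq0.ne'
  have hq1' := hq1.ne'
  have hq2' := hq2.ne'
  have hs' := hs.ne'
  have hr1 : 1 + x ^ 2 * a 1 ≠ 0 := by rw [mul_comm]; exact hq1'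
  have hr2 : 1 + x ^ 2 * a 2 ≠ 0 := by rw [mul_comm]; exact hq2'
  field_simp

lemma tendsto_p (ha : ∀ k, 0 < a k) : Tendsto (fun y => pfun a y) atTop atTop := by
  apply tendsto_atTop_mono (fun x => ?_)
    ((tendsto_pow_atTop two_ne_zero).const_mul_atTop (ha 0))
  have h0 := mul_nonneg (ha 0).le (sq_nonneg x)
  have h1 := mul_nonneg (ha 1).le (sq_nonneg x)
  have h2 := mul_nonneg (ha 2).le (sq_nonneg x)
  unfold pfun
  nlinarith [mul_nonneg h0 h1, mul_nonneg h0 h2, mul_nonneg h1 h2,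
    mul_nonneg (mul_nonneg h0 h1) h2]

lemma tendsto_arctan_sqrt_p (ha : ∀ k, 0 < a k) :
    Tendsto (fun y => Real.arctan (Real.sqrt (pfun a y))) atTop (nhds (π / 2)) := by
  have hsqrt : Tendsto Real.sqrt atTop atTop := by
    rw [show Real.sqrt = fun x : ℝ => x ^ (1 / 2 : ℝ) from
      funext fun x => Real.sqrt_eq_rpow x]
    exact tendsto_rpow_atTop (by norm_num)
  exact (tendsto_nhds_of_tendsto_nhdsWithin Real.tendsto_arctan_atTop).comp
    (hsqrt.comp (tendsto_p ha))

lemma key (ha : ∀ k, 0 < a k) :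
    IntegrableOn (h a) (Ioi (0 : ℝ)) ∧ (∫ x in Ioi (0 : ℝ), h a x) = π / 2 := by
  have hcont : ContinuousWithinAt (fun y => Real.arctan (Real.sqrt (pfun a y)))
      (Ici (0 : ℝ)) 0 := by
    apply Continuous.continuousWithinAt
    apply Real.continuous_arctan.comp
    apply Real.continuous_sqrt.comp
    unfold pfun
    continuity
  have hderiv : ∀ x ∈ Ioi (0 : ℝ),
      HasDerivAt (fun y => Real.arctan (Real.sqrt (pfun a y))) (h a x) x :=
    fun x hx => hasDeriv ha hx
  have hpos : ∀ x ∈ Ioi (0 : ℝ), 0 ≤ h a x := by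
    intro x _
    unfold h
    have := f_nonneg ha 0 x
    have := f_nonneg ha 1 x
    have := f_nonneg ha 2 x
    have := (ha 0).le
    have := (ha 1).le
    have := (ha 2).le
    positivity
  have htend := tendsto_arctan_sqrt_p ha
  refine ⟨integrableOn_Ioi_deriv_of_nonneg hcont hderiv hpos htend, ?_⟩
  have := integral_Ioi_of_hasDerivAt_of_nonneg hcont hderiv hpos htend
  have hp0 : pfun a 0 = 0 := by unfold pfun; ring
  rw [this, hp0]
  simp

lemma f_integrableOn (ha : ∀ k, 0 < a k) (k : Fin 3) :
    IntegrableOn (f a k) (Ioi (0 : ℝ)) := by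
  have hIh := (key ha).1
  have hm : AEStronglyMeasurable (fun x => a k * f a k x)
      ((volume : Measure ℝ).restrict (Ioi 0)) :=
    ((measurable_const.mul (f_meas k))).aestronglyMeasurable
  have hk : IntegrableOn (fun x => a k * f a k x) (Ioi (0 : ℝ)) := by
    apply hIh.mono' hm
    apply Filter.Eventually.of_forall
    intro x
    rw [Real.norm_eq_abs, abs_of_nonneg (mul_nonneg (ha k).le (f_nonneg ha k x))]
    have h0 := mul_nonneg (ha 0).le (f_nonneg ha 0 x)
    have h1 := mul_nonneg (ha 1).le (f_nonneg ha 1 x)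
    have h2 := mul_nonneg (ha 2).le (f_nonneg ha 2 x)
    fin_cases k <;> unfold h <;> simp <;> linarith
  have heq : (fun x => (a k)⁻¹ * (a k * f a k x)) = f a k := by
    funext x
    rw [← mul_assoc, inv_mul_cancel₀ (ha k).ne', one_mul]
  have := hk.const_mul (a k)⁻¹
  rwa [heq] at this

lemma integral_split (ha : ∀ k, 0 < a k) :
    (∫ x in Ioi (0 : ℝ), h a x)
      = a 0 * (∫ x in Ioi (0 : ℝ), f a 0 x) + a 1 * (∫ x in Ioi (0 : ℝ), f a 1 x)
        + a 2 * (∫ x in Ioi (0 : ℝ), f a 2 x) := by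
  have i0 := (f_integrableOn ha 0).const_mul (a 0)
  have i1 := (f_integrableOn ha 1).const_mul (a 1)
  have i2 := (f_integrableOn ha 2).const_mul (a 2)
  have i01 : IntegrableOn (fun x => a 0 * f a 0 x + a 1 * f a 1 x) (Ioi (0 : ℝ)) :=
    i0.add i1
  unfold h
  rw [integral_add i01 i2, integral_add i0 i1,
    integral_const_mul, integral_const_mul, integral_const_mul]

lemma integral_even (k : Fin 3) :
    (∫ x : ℝ, f a k x) = 2 * ∫ x in Ioi (0 : ℝ), f a k x := by
  calc (∫ x : ℝ, f a k x) = ∫ x : ℝ, f a k |x| := by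
        congr 1
        funext x
        simp [f, Pfun, pfun, sq_abs]
    _ = 2 * ∫ x in Ioi (0 : ℝ), f a k x := integral_comp_abs

end PhiAux

/-- For positive `a₁,a₂,a₃`, the angles satisfy `φ₁ + φ₂ + φ₃ = π`. -/
theorem stmt_0 (a : Fin 3 → ℝ) (ha : ∀ k, 0 < a k) :
    phi a 0 + phi a 1 + phi a 2 = π := by
  have hphi : ∀ k, phi a k = a k * (2 * ∫ x in Set.Ioi (0 : ℝ), PhiAux.f a k x) := by
    intro k
    rw [phi, ← PhiAux.integral_even]
    rfl
  rw [hphi 0, hphi 1, hphi 2]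
  have hs := PhiAux.integral_split ha
  have hv := (PhiAux.key ha).2
  rw [hs] at hv
  linarith
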